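/- Let p ≥ 5 be a prime, k an algebraic closure of 𝔽_p, and a = (p-1)/2. Let G(x,y,z) = xy(x+y)(x+zy) ∈ k[x,y,z], and let H(z) ∈ k[z] be the coefficient of the monomial x^{p-1}y^{p-1} in G(x,y,z)^a, viewed as a polynomial in x,y over k[z]. Then H(0) = 1 and H is a non-constant monic polynomial in z, so there exists u ∈ k with u ≠ 0 and H(u) = 0. -/

import Mathlib

open MvPolynomial Finset

theorem aux_expand (R : Type*) [CommRing R] (a : ℕ) (z : R) :
    ((X 0 * X 1 * (X 0 + X 1) * (X 0 + C z * X 1) : MvPolynomial (Fin 2) R)) ^ a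
    = ∑ i ∈ range (a+1), ∑ j ∈ range (a+1),
        monomial (Finsupp.single 0 (a+i+j) + Finsupp.single 1 (a+(a-i)+(a-j)))
          ((a.choose i * a.choose j : R) * z ^ (a-j)) := by
  have h1 : ((X 0 * X 1 * (X 0 + X 1) * (X 0 + C z * X 1) : MvPolynomial (Fin 2) R)) ^ a
      = (X 0 ^ a * X 1 ^ a) * ((X 0 + X 1) ^ a * (X 0 + C z * X 1) ^ a) := by
    rw [show (X 0 * X 1 * (X 0 + X 1) * (X 0 + C z * X 1) : MvPolynomial (Fin 2) R)
        = (X 0 * X 1) * ((X 0 + X 1) * (X 0 + C z * X 1)) by ring, mul_pow, mul_pow, mul_pow]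
  rw [h1, add_pow, add_pow, Finset.sum_mul_sum, Finset.mul_sum]
  refine Finset.sum_congr rfl fun i hi => ?_
  rw [Finset.mul_sum]
  refine Finset.sum_congr rfl fun j hj => ?_
  rw [mul_pow, ← C_pow]
  simp only [X_pow_eq_monomial]
  rw [show (C (z ^ (a - j)) : MvPolynomial (Fin 2) R) = monomial 0 (z ^ (a-j)) from rfl]
  rw [show ((a.choose i : MvPolynomial (Fin 2) R)) = monomial 0 (a.choose i : R) by simp [C_apply.symm], show ((a.choose j : MvPolynomial (Fin 2) R)) = monomial 0 (a.choose j : R) by simp [C_apply.symm]]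
  simp only [monomial_mul]
  congr 1
  · congr 1
    apply Finsupp.ext; intro s
    fin_cases s <;> simp [Finsupp.single_apply] <;> omega
  · ring

theorem single_eq_iff' (n₁ m₁ n₂ m₂ : ℕ) :
    (Finsupp.single (0:Fin 2) n₁ + Finsupp.single 1 m₁
      = Finsupp.single 0 n₂ + Finsupp.single 1 m₂) ↔ n₁ = n₂ ∧ m₁ = m₂ := by
  constructor
  · intro h
    have h0 := DFunLike.congr_fun h 0
    have h1 := DFunLike.congr_fun h 1
    simp [Finsupp.single_apply] at h0 h1
    exact ⟨h0, h1⟩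
  · rintro ⟨rfl, rfl⟩; rfl

theorem aux_coeff (R : Type*) [CommRing R] (a : ℕ) (z : R) :
    MvPolynomial.coeff (Finsupp.single 0 (2*a) + Finsupp.single 1 (2*a))
      (((X 0 * X 1 * (X 0 + X 1) * (X 0 + C z * X 1) : MvPolynomial (Fin 2) R)) ^ a)
    = ∑ i ∈ range (a+1), (a.choose i * a.choose (a-i)) • z ^ i := by
  rw [aux_expand]
  simp only [coeff_sum, coeff_monomial]
  refine Finset.sum_congr rfl fun i hi => ?_
  have hi' : i ≤ a := by simp at hi; omega
  have key : ∀ j ∈ range (a+1),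
      (if (Finsupp.single (0:Fin 2) (a+i+j) + Finsupp.single 1 (a+(a-i)+(a-j))
          = Finsupp.single 0 (2*a) + Finsupp.single 1 (2*a))
        then ((a.choose i * a.choose j : R) * z ^ (a-j)) else 0)
      = if j = a - i then ((a.choose i * a.choose j : R) * z ^ (a-j)) else 0 := by
    intro j hj
    simp only [Finset.mem_range] at hj
    refine if_congr ((single_eq_iff' _ _ _ _).trans (by omega)) rfl rfl
  refine (Finset.sum_congr rfl key).trans ?_
  rw [Finset.sum_ite_eq' (range (a+1)) (a-i), if_pos (by simp only [Finset.mem_range]; omega)]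
  rw [Nat.sub_sub_self hi', nsmul_eq_mul, Nat.cast_mul]

/-- For a prime `p ≥ 5`, `k = algebraic closure of 𝔽_p`, `a = (p-1)/2`,
`G(x,y,z) = xy(x+y)(x+zy)` and `H(z)` the coefficient of `x^{p-1}y^{p-1}` in `G^a`,
we have `H(0) = 1`, `H` is monic and non-constant, and `H` has a nonzero root `u ∈ k`. -/
theorem exists_root_of_coeff_poly (p : ℕ) [Fact p.Prime] (hp5 : 5 ≤ p) :
    let k := AlgebraicClosure (ZMod p)
    let a : ℕ := (p - 1) / 2
    let x : MvPolynomial (Fin 2) (Polynomial k) := X 0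
    let y : MvPolynomial (Fin 2) (Polynomial k) := X 1
    let G := x * y * (x + y) * (x + C Polynomial.X * y)
    let H : Polynomial k :=
      MvPolynomial.coeff (Finsupp.single 0 (p - 1) + Finsupp.single 1 (p - 1)) (G ^ a)
    Polynomial.eval 0 H = 1 ∧ H.Monic ∧ 0 < H.natDegree ∧
      ∃ u : k, u ≠ 0 ∧ Polynomial.eval u H = 0 := by
  intro k a x y G H
  have hp : p.Prime := Fact.out
  have hodd : p % 2 = 1 := by
    obtain ⟨m, hm⟩ := hp.odd_of_ne_two (by omega)
    omega
  have ha : a = (p-1)/2 := rfl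
  have h2a : p - 1 = 2 * a := by omega
  have ha2 : 2 ≤ a := by omega
  have hH : H = ∑ i ∈ range (a+1),
      (a.choose i * a.choose (a-i)) • (Polynomial.X : Polynomial k) ^ i := by
    show MvPolynomial.coeff (Finsupp.single 0 (p - 1) + Finsupp.single 1 (p - 1))
      (((X 0 * X 1 * (X 0 + X 1) * (X 0 + C Polynomial.X * X 1)
        : MvPolynomial (Fin 2) (Polynomial k))) ^ a) = _
    rw [h2a]
    exact aux_coeff (Polynomial k) a Polynomial.X
  have heval0 : Polynomial.eval 0 H = 1 := by
    rw [hH, Polynomial.eval_finset_sum]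
    rw [Finset.sum_eq_single 0]
    · simp
    · intro i hi hne
      simp [zero_pow hne]
    · intro h
      simp at h
  have hcoeffa : H.coeff a = 1 := by
    rw [hH, Polynomial.finset_sum_coeff]
    rw [Finset.sum_eq_single a]
    · simp
    · intro i hi hne
      simp only [Polynomial.coeff_smul, Polynomial.coeff_X_pow, if_neg (Ne.symm hne), smul_zero]
    · intro h
      simp at h
  have hdegle : H.natDegree ≤ a := by
    refine Polynomial.natDegree_le_iff_coeff_eq_zero.mpr fun N hN => ?_
    rw [hH, Polynomial.finset_sum_coeff]
    refine Finset.sum_eq_zero fun i hi => ?_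
    simp only [Finset.mem_range] at hi
    have hiN : N ≠ i := by omega
    simp only [Polynomial.coeff_smul, Polynomial.coeff_X_pow, if_neg hiN, smul_zero]
  have hnd : H.natDegree = a :=
    le_antisymm hdegle (Polynomial.le_natDegree_of_ne_zero (by rw [hcoeffa]; exact one_ne_zero))
  have hmonic : H.Monic := by
    rw [Polynomial.Monic, Polynomial.leadingCoeff, hnd, hcoeffa]
  refine ⟨heval0, hmonic, by omega, ?_⟩
  have hdegne : H.degree ≠ 0 := by
    have : 0 < H.degree := Polynomial.natDegree_pos_iff_degree_pos.mp (by omega)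
    exact this.ne'
  obtain ⟨u, hu⟩ := IsAlgClosed.exists_root H hdegne
  refine ⟨u, ?_, hu⟩
  rintro rfl
  rw [Polynomial.IsRoot, heval0] at hu
  exact one_ne_zero hu
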